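/- For every integer γ ≥ 1 and reals c, C > 0 there exist c' > 0 and n₀ with the following property. Let n ≥ n₀ and let H = (V,E) be a graph on n vertices with girth at least 2γ + 2 and |E| ≥ c·n^{1 + 1/γ}, together with disjoint subsets S, T ⊆ V with |S|·|T| ≤ C·n^{1 + 1/γ}, such that every edge of H is required by some pair (s,t) ∈ S × T with dist_H(s,t) = γ. Then there exist a set P₁ ⊆ S × T with |P₁| ≥ c'·n^{1 + 1/γ}/γ³ and a map φ : P₁ → E such that for each (s,t) ∈ P₁: dist_H(s,t) = γ, the pair (s,t) requires the edge φ(s,t), and the unique shortest s–t path in H contains no edge of the form φ(s',t') with (s',t') ∈ P₁ \ {(s,t)}. -/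

import Mathlib

open SimpleGraph

/-- In a graph `G`, the pair `(s, t)` requires the edge `e` if every shortest
walk from `s` to `t` includes `e`. -/
def Requires {V : Type*} (G : SimpleGraph V) (s t : V) (e : Sym2 V) : Prop :=
  ∀ p : G.Walk s t, p.length = G.dist s t → e ∈ p.edges

lemma unique_shortest_aux {V : Type*} [DecidableEq V] {G : SimpleGraph V} (k₀ : ℕ)
    (hg : ∀ (a : V) (c : G.Walk a a), c.IsCycle → 2 * k₀ < c.length) :
    ∀ k, k ≤ k₀ → ∀ (s t : V) (w1 w2 : G.Walk s t),
      w1.IsPath → w2.IsPath → G.dist s t = k →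
      w1.length = k → w2.length = k → w1 = w2 := by
  intro k
  induction k with
  | zero =>
    intro _ s t w1 w2 _ _ _ h1 h2
    cases w1 with
    | nil =>
      cases w2 with
      | nil => rfl
      | cons h p => simp at h2
    | cons h p => simp at h1
  | succ k ih =>
    intro hk s t w1 w2 hp1 hp2 hdist h1 h2
    cases w1 with
    | nil => simp at h1
    | cons h1' p1 =>
      cases w2 with
      | nil => simp at h2
      | cons h2' p2 =>
        rename_i a b
        rw [Walk.cons_isPath_iff] at hp1 hp2
        simp only [Walk.length_cons, Nat.add_right_cancel_iff] at h1 h2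
        -- dist a t = k
        have hreach : G.Reachable a t := ⟨p1⟩
        have hdat : G.dist a t = k := by
          have hle : G.dist a t ≤ k := h1 ▸ G.dist_le p1
          obtain ⟨w, hw⟩ := hreach.exists_walk_length_eq_dist
          have := G.dist_le (Walk.cons h1' w)
          rw [Walk.length_cons, hw, hdist] at this
          omega
        by_cases hab : a = b
        · subst hab
          rw [ih (by omega) a t p1 p2 hp1.1 hp2.1 hdat h1 h2]
        · exfalso
          set u : G.Walk a b := p1.append p2.reverse with hu
          have hsu : s ∉ u.support := by
            rw [hu, Walk.mem_support_append_iff]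
            push_neg
            exact ⟨hp1.2, by rw [Walk.support_reverse]; simpa using hp2.2⟩
          set P : G.Walk a b := u.bypass with hP
          have hPpath : P.IsPath := Walk.bypass_isPath u
          have hsP : s ∉ P.support := fun hs => hsu (Walk.support_bypass_subset u (hP ▸ hs))
          set R : G.Walk a s := P.concat h2'.symm with hR
          have hRpath : R.IsPath := by
            rw [← Walk.isPath_reverse_iff, hR, Walk.reverse_concat,
              Walk.cons_isPath_iff]
            refine ⟨(Walk.isPath_reverse_iff P).2 hPpath, ?_⟩
            rw [Walk.support_reverse]
            simpa using hsP
          have hedge : s(s, a) ∉ R.edges := by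
            rw [hR, Walk.edges_concat]
            intro hmem
            rw [List.concat_eq_append, List.mem_append, List.mem_singleton] at hmem
            rcases hmem with hmem | hmem
            · exact hsP (Walk.fst_mem_support_of_mem_edges P hmem)
            · rw [Sym2.eq_iff] at hmem
              rcases hmem with ⟨hsb, -⟩ | ⟨-, hab'⟩
              · exact h2'.ne hsb
              · exact hab hab'
          have hcyc : (Walk.cons h1' R).IsCycle :=
            (Walk.cons_isCycle_iff R h1').2 ⟨hRpath, hedge⟩
          have hlen : (Walk.cons h1' R).length ≤ 2 * k₀ := by
            have hPle : P.length ≤ u.length := Walk.length_bypass_le u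
            have : u.length = 2 * k := by
              rw [hu, Walk.length_append, Walk.length_reverse, h1, h2]; omega
            rw [Walk.length_cons, hR, Walk.length_concat]
            omega
          exact absurd (hg s _ hcyc) (by omega)

lemma shortest_unique {V : Type*} [DecidableEq V] {G : SimpleGraph V} {γ : ℕ}
    (hg : ∀ (a : V) (c : G.Walk a a), c.IsCycle → 2 * γ < c.length)
    {s t : V} (hd : G.dist s t = γ) (w1 w2 : G.Walk s t)
    (h1 : w1.length = G.dist s t) (h2 : w2.length = G.dist s t) : w1 = w2 :=
  unique_shortest_aux γ hg γ le_rfl s t w1 w2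
    (w1.isPath_of_length_eq_dist h1) (w2.isPath_of_length_eq_dist h2) hd
    (by rw [h1, hd]) (by rw [h2, hd])

open Finset in
lemma exists_indep {α : Type*} [DecidableEq α] (d : ℕ) (r : α → α → Prop) :
    ∀ (n : ℕ) (A : Finset α), A.card ≤ n →
      (∀ v ∈ A, ∀ B ⊆ A, (∀ w ∈ B, r v w) → B.card ≤ d) →
      ∃ B ⊆ A, A.card ≤ (2 * d + 1) * B.card ∧
        ∀ v ∈ B, ∀ w ∈ B, v ≠ w → ¬ r v w := by
  classical
  intro n
  induction n with
  | zero =>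
    intro A hA _
    exact ⟨∅, empty_subset _, by simpa using hA, by simp⟩
  | succ n ih =>
    intro A hA hdeg
    rcases A.eq_empty_or_nonempty with rfl | hne
    · exact ⟨∅, empty_subset _, by simp, by simp⟩
    have hout : ∀ v ∈ A, (A.filter (fun w => r v w)).card ≤ d := fun v hv =>
      hdeg v hv _ (filter_subset _ _) (fun w hw => (mem_filter.1 hw).2)
    have hb1 : ∑ v ∈ A, (A.filter (fun w => r v w)).card ≤ d * A.card := by
      calc ∑ v ∈ A, (A.filter (fun w => r v w)).card ≤ ∑ _v ∈ A, d :=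
            Finset.sum_le_sum fun v hv => hout v hv
        _ = d * A.card := by rw [Finset.sum_const, smul_eq_mul, mul_comm]
    have hswap : ∑ v ∈ A, (A.filter (fun w => r w v)).card
        = ∑ w ∈ A, (A.filter (fun x => r w x)).card := by
      simp_rw [Finset.card_filter]
      exact Finset.sum_comm
    have hsum : ∑ v ∈ A, (A.filter (fun w => r v w ∨ r w v)).card
        ≤ 2 * d * A.card := by
      have h0 : ∑ v ∈ A, (A.filter (fun w => r v w ∨ r w v)).card
          ≤ ∑ v ∈ A, ((A.filter (fun w => r v w)).card
            + (A.filter (fun w => r w v)).card) := by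
        refine Finset.sum_le_sum fun v hv => ?_
        rw [Finset.filter_or]
        exact Finset.card_union_le _ _
      rw [Finset.sum_add_distrib, hswap] at h0
      calc ∑ v ∈ A, (A.filter (fun w => r v w ∨ r w v)).card
          ≤ d * A.card + d * A.card := h0.trans (Nat.add_le_add hb1 hb1)
        _ = 2 * d * A.card := by ring
    have hpig : ∃ v ∈ A, (A.filter (fun w => r v w ∨ r w v)).card ≤ 2 * d := by
      by_contra hcon
      push_neg at hcon
      have := Finset.card_nsmul_le_sum A _ (2 * d + 1) (fun v hv => hcon v hv)
      rw [smul_eq_mul] at this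
      have hc1 : 1 ≤ A.card := hne.card_pos
      nlinarith [hsum]
    obtain ⟨v, hv, hvdeg⟩ := hpig
    set A' := (A.erase v).filter (fun w => ¬ r v w ∧ ¬ r w v) with hA'
    have hA'sub : A' ⊆ A := (filter_subset _ _).trans (erase_subset _ _)
    have hcard : A.card ≤ A'.card + (2 * d + 1) := by
      have h1 : A'.card + ((A.erase v).filter (fun w => ¬(¬ r v w ∧ ¬ r w v))).card
          = (A.erase v).card := by
        simpa [hA'] using Finset.card_filter_add_card_filter_not
          (s := A.erase v) (p := fun w => ¬ r v w ∧ ¬ r w v)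
      have h2 : ((A.erase v).filter (fun w => ¬(¬ r v w ∧ ¬ r w v))).card
          ≤ (A.filter (fun w => r v w ∨ r w v)).card := by
        apply Finset.card_le_card
        intro w hw
        rw [mem_filter] at hw ⊢
        exact ⟨(erase_subset _ _) hw.1, by tauto⟩
      have h3 := Finset.card_erase_add_one hv
      omega
    have hA'small : A'.card ≤ n := by
      have := Finset.card_le_card hA'sub
      have h4 : A'.card ≤ (A.erase v).card := Finset.card_le_card (filter_subset _ _)
      have h3 := Finset.card_erase_add_one hv
      omega
    obtain ⟨B', hB'sub, hB'card, hB'ind⟩ := ih A' hA'small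
      (fun w hw B hB hall => hdeg w (hA'sub hw) B (hB.trans hA'sub) hall)
    have hvB' : v ∉ B' := fun h =>
      (Finset.notMem_erase v A) ((Finset.filter_subset _ _) (hB'sub h))
    refine ⟨insert v B', Finset.insert_subset hv (hB'sub.trans hA'sub), ?_, ?_⟩
    · rw [Finset.card_insert_of_notMem hvB', Nat.mul_add, Nat.mul_one]
      omega
    · intro x hx y hy hxy
      rcases Finset.mem_insert.1 hx with rfl | hx'
      · rcases Finset.mem_insert.1 hy with rfl | hy'
        · exact absurd rfl hxy
        · exact ((Finset.mem_filter.1 (hB'sub hy')).2).1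
      · rcases Finset.mem_insert.1 hy with hy' | hy'
        · subst hy'
          exact ((Finset.mem_filter.1 (hB'sub hx')).2).2
        · exact hB'ind x hx' y hy' hxy

theorem stmt_11 :
    ∀ γ : ℕ, 1 ≤ γ → ∀ c C : ℝ, 0 < c → 0 < C →
    ∃ c' : ℝ, 0 < c' ∧ ∃ n₀ : ℕ, ∀ n : ℕ, n₀ ≤ n →
      ∀ (H : SimpleGraph (Fin n)) (S T : Finset (Fin n)),
        ((2 * γ + 2 : ℕ) : ℕ∞) ≤ H.egirth →
        c * (n : ℝ) ^ (1 + (1 : ℝ) / (γ : ℝ)) ≤ (H.edgeSet.ncard : ℝ) →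
        Disjoint S T →
        ((S.card : ℝ) * (T.card : ℝ)) ≤ C * (n : ℝ) ^ (1 + (1 : ℝ) / (γ : ℝ)) →
        (∀ e ∈ H.edgeSet, ∃ s ∈ S, ∃ t ∈ T, H.dist s t = γ ∧ Requires H s t e) →
        ∃ (P₁ : Finset (Fin n × Fin n)) (φ : Fin n × Fin n → Sym2 (Fin n)),
          P₁ ⊆ S ×ˢ T ∧
          c' * (n : ℝ) ^ (1 + (1 : ℝ) / (γ : ℝ)) / (γ : ℝ) ^ 3 ≤ (P₁.card : ℝ) ∧
          ∀ pq ∈ P₁,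
            H.dist pq.1 pq.2 = γ ∧
            φ pq ∈ H.edgeSet ∧
            Requires H pq.1 pq.2 (φ pq) ∧
            ∀ p : H.Walk pq.1 pq.2, p.length = H.dist pq.1 pq.2 →
              ∀ pq' ∈ P₁, pq' ≠ pq → φ pq' ∉ p.edges := by
  classical
  intro γ hγ c C hc hC
  have hγR : (1 : ℝ) ≤ (γ : ℝ) := by exact_mod_cast hγ
  refine ⟨c / 3, by positivity, 0, ?_⟩
  intro n _ H S T hg hE hdisj hST hreq
  rcases Nat.eq_zero_or_pos n with rfl | hn
  · refine ⟨∅, fun p => p.1.elim0, Finset.empty_subset _, ?_, by simp⟩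
    have hxne : (1 : ℝ) + 1 / (γ : ℝ) ≠ 0 := by positivity
    simp only [Finset.card_empty, Nat.cast_zero, Real.zero_rpow hxne]
    simp
  haveI : Inhabited (Fin n) := ⟨⟨0, hn⟩⟩
  -- girth hypothesis in usable form
  have hγcyc : ∀ (a : Fin n) (cw : H.Walk a a), cw.IsCycle → 2 * γ < cw.length := by
    intro a cw hcw
    have h1 := SimpleGraph.le_egirth.mp hg a cw hcw
    have h2 : (2 * γ + 2 : ℕ) ≤ cw.length := by exact_mod_cast h1
    omega
  choose! s0 hs0 t0 ht0 hd0 hr0 using hreq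
  set F : Sym2 (Fin n) → Fin n × Fin n := fun e => (s0 e, t0 e) with hF
  set Ef : Finset (Sym2 (Fin n)) := H.edgeSet.toFinite.toFinset with hEf
  have hEfmem : ∀ e, e ∈ Ef ↔ e ∈ H.edgeSet := fun e => Set.Finite.mem_toFinset _
  have hEcard : (H.edgeSet.ncard : ℝ) = (Ef.card : ℝ) := by
    rw [hEf, Set.ncard_eq_toFinset_card _ H.edgeSet.toFinite]
  set P₀ : Finset (Fin n × Fin n) := Ef.image F with hP₀
  have hmemP₀ : ∀ p ∈ P₀, p.1 ∈ S ∧ p.2 ∈ T ∧ H.dist p.1 p.2 = γ := by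
    intro p hp
    obtain ⟨e, he, rfl⟩ := Finset.mem_image.1 hp
    have he' : e ∈ H.edgeSet := (hEfmem e).1 he
    exact ⟨hs0 e he', ht0 e he', hd0 e he'⟩
  -- canonical shortest-path edge lists
  have hex : ∀ p : Fin n × Fin n, ∃ l : List (Sym2 (Fin n)), p ∈ P₀ →
      (∃ w : H.Walk p.1 p.2, w.length = H.dist p.1 p.2 ∧ w.edges = l) ∧
      (∀ w : H.Walk p.1 p.2, w.length = H.dist p.1 p.2 → w.edges = l) := by
    intro p
    by_cases hp : p ∈ P₀
    · have hd : H.dist p.1 p.2 = γ := (hmemP₀ p hp).2.2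
      have hreach : H.Reachable p.1 p.2 :=
        SimpleGraph.Reachable.of_dist_ne_zero (by omega)
      obtain ⟨w0, hw0⟩ := hreach.exists_walk_length_eq_dist
      refine ⟨w0.edges, fun _ => ⟨⟨w0, hw0, rfl⟩, fun w hw => ?_⟩⟩
      rw [shortest_unique hγcyc hd w w0 hw hw0]
    · exact ⟨[], fun h => absurd h hp⟩
  choose eL heL using hex
  have hlenL : ∀ p ∈ P₀, (eL p).length = γ := by
    intro p hp
    obtain ⟨⟨w0, hw0, hedges⟩, -⟩ := heL p hp
    rw [← hedges, Walk.length_edges, hw0, (hmemP₀ p hp).2.2]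
  -- the map φ
  have hexφ : ∀ p : Fin n × Fin n, ∃ e : Sym2 (Fin n), p ∈ P₀ → e ∈ Ef ∧ F e = p := by
    intro p
    by_cases hp : p ∈ P₀
    · obtain ⟨e, he, hFe⟩ := Finset.mem_image.1 hp
      exact ⟨e, fun _ => ⟨he, hFe⟩⟩
    · exact ⟨s(default, default), fun h => absurd h hp⟩
  choose φ hφ using hexφ
  -- Requires transported along F e = p
  have hreqF : ∀ e ∈ H.edgeSet, ∀ p : Fin n × Fin n, F e = p →
      Requires H p.1 p.2 e := by
    intro e he p hFe
    have h1 : s0 e = p.1 := congrArg Prod.fst hFe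
    have h2 : t0 e = p.2 := congrArg Prod.snd hFe
    have := hr0 e he
    rw [h1, h2] at this
    exact this
  have hreqφ : ∀ p ∈ P₀, φ p ∈ H.edgeSet ∧ Requires H p.1 p.2 (φ p) := by
    intro p hp
    obtain ⟨he, hFe⟩ := hφ p hp
    have he' : φ p ∈ H.edgeSet := (hEfmem _).1 he
    exact ⟨he', hreqF _ he' p hFe⟩
  have hmem_eL : ∀ p ∈ P₀, ∀ e, Requires H p.1 p.2 e → e ∈ eL p := by
    intro p hp e hre
    obtain ⟨⟨w0, hw0, hedges⟩, -⟩ := heL p hp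
    rw [← hedges]
    exact hre w0 hw0
  -- |Ef| ≤ γ * |P₀|
  have hfib : ∀ p ∈ P₀, (Ef.filter (fun e => F e = p)).card ≤ γ := by
    intro p hp
    have hsub : Ef.filter (fun e => F e = p) ⊆ (eL p).toFinset := by
      intro e he
      rw [Finset.mem_filter] at he
      rw [List.mem_toFinset]
      exact hmem_eL p hp e (hreqF e ((hEfmem e).1 he.1) p he.2)
    calc (Ef.filter (fun e => F e = p)).card ≤ (eL p).toFinset.card :=
          Finset.card_le_card hsub
      _ ≤ (eL p).length := List.toFinset_card_le _
      _ = γ := hlenL p hp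
  have hEP : Ef.card ≤ γ * P₀.card := by
    rw [Finset.card_eq_sum_card_fiberwise
      (fun e he => Finset.mem_image_of_mem F he)]
    calc ∑ p ∈ P₀, (Ef.filter (fun e => F e = p)).card ≤ ∑ _p ∈ P₀, γ :=
          Finset.sum_le_sum hfib
      _ = γ * P₀.card := by rw [Finset.sum_const, smul_eq_mul, mul_comm]
  -- conflict relation and independent set
  set rr : (Fin n × Fin n) → (Fin n × Fin n) → Prop :=
    fun p q => q ∈ P₀ ∧ p ≠ q ∧ φ q ∈ eL p with hrr
  have hdeg : ∀ p ∈ P₀, ∀ B ⊆ P₀, (∀ q ∈ B, rr p q) → B.card ≤ γ := by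
    intro p hp B hB hall
    have hinj : Set.InjOn φ B := by
      intro q1 h1 q2 h2 heq
      have e1 := (hφ q1 (hB h1)).2
      have e2 := (hφ q2 (hB h2)).2
      rw [← e1, ← e2, heq]
    have hmaps : ∀ q ∈ B, φ q ∈ (eL p).toFinset := fun q hq =>
      List.mem_toFinset.2 (hall q hq).2.2
    calc B.card ≤ (eL p).toFinset.card :=
          Finset.card_le_card_of_injOn φ hmaps hinj
      _ ≤ (eL p).length := List.toFinset_card_le _
      _ = γ := hlenL p hp
  obtain ⟨P₁, hP₁sub, hP₁card, hP₁ind⟩ :=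
    exists_indep γ rr P₀.card P₀ le_rfl hdeg
  refine ⟨P₁, φ, ?_, ?_, ?_⟩
  · intro p hp
    obtain ⟨h1, h2, -⟩ := hmemP₀ p (hP₁sub hp)
    exact Finset.mem_product.2 ⟨h1, h2⟩
  · -- cardinality bound
    have h1 : c * (n : ℝ) ^ (1 + (1 : ℝ) / (γ : ℝ)) ≤ (Ef.card : ℝ) :=
      hEcard ▸ hE
    have h2 : (Ef.card : ℝ) ≤ (γ : ℝ) * (P₀.card : ℝ) := by exact_mod_cast hEP
    have h3 : (P₀.card : ℝ) ≤ (2 * (γ : ℝ) + 1) * (P₁.card : ℝ) := by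
      exact_mod_cast hP₁card
    have key : (γ : ℝ) * (2 * (γ : ℝ) + 1) ≤ 3 * (γ : ℝ) ^ 3 := by
      nlinarith [hγR, sq_nonneg ((γ : ℝ) - 1), sq_nonneg (γ : ℝ)]
    have hγpos : (0 : ℝ) < (γ : ℝ) := by linarith
    have hP₁nn : (0 : ℝ) ≤ (P₁.card : ℝ) := Nat.cast_nonneg _
    rw [div_le_iff₀ (by positivity : (0 : ℝ) < (γ : ℝ) ^ 3)]
    have e1 : (γ : ℝ) * (P₀.card : ℝ)
        ≤ (γ : ℝ) * ((2 * (γ : ℝ) + 1) * (P₁.card : ℝ)) :=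
      mul_le_mul_of_nonneg_left h3 (le_of_lt hγpos)
    have e2 : (γ : ℝ) * ((2 * (γ : ℝ) + 1) * (P₁.card : ℝ))
        = ((γ : ℝ) * (2 * (γ : ℝ) + 1)) * (P₁.card : ℝ) := by ring
    have e3 : ((γ : ℝ) * (2 * (γ : ℝ) + 1)) * (P₁.card : ℝ)
        ≤ 3 * (γ : ℝ) ^ 3 * (P₁.card : ℝ) :=
      mul_le_mul_of_nonneg_right key hP₁nn
    nlinarith [h1, h2, e1, e2, e3]
  · intro pq hpq
    have hpq₀ := hP₁sub hpq
    obtain ⟨-, -, hd⟩ := hmemP₀ pq hpq₀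
    obtain ⟨hφe, hφreq⟩ := hreqφ pq hpq₀
    refine ⟨hd, hφe, hφreq, ?_⟩
    intro w hw pq' hpq' hne
    have hwe : w.edges = eL pq := (heL pq hpq₀).2 w hw
    rw [hwe]
    intro hmem
    exact hP₁ind pq hpq pq' hpq' (Ne.symm hne) ⟨hP₁sub hpq', Ne.symm hne, hmem⟩
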